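/- Let V₁ and V₂ be finite-dimensional complex representations of S_k and S_{n−k} respectively, and let m(V₁⊗V₂) = Ind_{S_k×S_{n−k}}^{S_n}(V₁⊗V₂). Define W^x_{S_m}(ρ) = (1/dim ρ)·Σ_{σ∈S_m} χ_ρ(σ)·x^{l(σ)}, where l(σ) is the number of cycles of σ. Then W^x_{S_n}(m(V₁⊗V₂)) = W^x_{S_k}(V₁)·W^x_{S_{n−k}}(V₂). -/

import Mathlib

/- STATEMENT 6: W^x(Ind_{S_k×S_{n−k}}^{S_n}(V₁⊗V₂)) = W^x_{S_k}(V₁)·W^x_{S_{n−k}}(V₂),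
   where W^x(ρ) = (1/dim ρ)Σ_σ χ_ρ(σ)x^{l(σ)} and the induced character is given by
   the standard induced character formula. -/

attribute [local instance] Classical.propDecidable

/-- `l(σ)`: the number of cycles of `σ`, including fixed points. -/
def cycleCount {α : Type} [Fintype α] [DecidableEq α] (σ : Equiv.Perm α) : ℕ :=
  Fintype.card α - σ.cycleType.sum + Multiset.card σ.cycleType

/-- The standard embedding `S_k × S_m → S_{k+m}`. -/
def permSum (k m : ℕ) : Equiv.Perm (Fin k) × Equiv.Perm (Fin m) →* Equiv.Perm (Fin (k + m)) where
  toFun P := Equiv.permCongr finSumFinEquiv (Equiv.Perm.sumCongrHom (Fin k) (Fin m) P)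
  map_one' := by ext x; simp
  map_mul' A B := by ext x; simp

/-- `W^x_{S_n}(ρ) = (1/dim ρ)·Σ_{σ∈S_n} χ_ρ(σ)·x^{l(σ)}`. -/
noncomputable def Wx (n : ℕ) {V : Type} [AddCommGroup V] [Module ℂ V]
    (ρ : Representation ℂ (Equiv.Perm (Fin n)) V) (x : ℂ) : ℂ :=
  (1 / (Module.finrank ℂ V : ℂ)) *
    ∑ σ : Equiv.Perm (Fin n), LinearMap.trace ℂ V (ρ σ) * x ^ cycleCount σ

section lems
open Equiv Equiv.Perm

lemma cycleType_permCongr' {α β : Type*} [Fintype α] [DecidableEq α] [Fintype β] [DecidableEq β]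
    (e : α ≃ β) (g : Perm α) : (Equiv.permCongr e g).cycleType = g.cycleType := by
  let f : α ≃ Subtype (fun _ : β => True) := e.trans (Equiv.subtypeUnivEquiv (fun _ => trivial)).symm
  have h : g.extendDomain f = Equiv.permCongr e g := by
    ext b
    rw [Equiv.Perm.extendDomain_apply_subtype _ _ trivial]
    simp [f, Equiv.permCongr_apply]
  rw [← h, Equiv.Perm.cycleType_extendDomain]

def sumLeftEquiv (α β : Type*) : α ≃ {x : α ⊕ β // x.isLeft} where
  toFun a := ⟨Sum.inl a, rfl⟩
  invFun x := x.1.getLeft x.2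
  left_inv a := rfl
  right_inv := by rintro ⟨(a | b), h⟩ <;> simp_all

def sumRightEquiv (α β : Type*) : β ≃ {x : α ⊕ β // x.isRight} where
  toFun b := ⟨Sum.inr b, rfl⟩
  invFun x := x.1.getRight x.2
  left_inv a := rfl
  right_inv := by rintro ⟨(a | b), h⟩ <;> simp_all

lemma cycleType_sumCongr {α β : Type*} [Fintype α] [DecidableEq α] [Fintype β] [DecidableEq β]
    (σ : Perm α) (τ : Perm β) :
    Equiv.Perm.cycleType (Equiv.sumCongr σ τ) = σ.cycleType + τ.cycleType := by
  have h1 : σ.extendDomain (sumLeftEquiv α β) = Equiv.sumCongr σ (1 : Perm β) := by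
    ext x
    cases x with
    | inl a => exact σ.extendDomain_apply_image (sumLeftEquiv α β) a
    | inr b => exact σ.extendDomain_apply_not_subtype (sumLeftEquiv α β) (by simp)
  have h2 : τ.extendDomain (sumRightEquiv α β) = Equiv.sumCongr (1 : Perm α) τ := by
    ext x
    cases x with
    | inl a => exact τ.extendDomain_apply_not_subtype (sumRightEquiv α β) (by simp)
    | inr b => exact τ.extendDomain_apply_image (sumRightEquiv α β) b
  have hd : Equiv.Perm.Disjoint (Equiv.sumCongr σ (1 : Perm β)) (Equiv.sumCongr (1 : Perm α) τ) := by
    intro x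
    cases x with
    | inl a => right; rfl
    | inr b => left; rfl
  have hm : Equiv.sumCongr σ (1 : Perm β) * Equiv.sumCongr (1 : Perm α) τ = Equiv.sumCongr σ τ := by
    rw [Equiv.Perm.sumCongr_mul]; simp
  rw [← hm, Equiv.Perm.Disjoint.cycleType_mul hd, ← h1, ← h2,
    Equiv.Perm.cycleType_extendDomain, Equiv.Perm.cycleType_extendDomain]

lemma cycleCount_conj {n : ℕ} (Y p : Perm (Fin n)) :
    cycleCount (Y⁻¹ * p * Y) = cycleCount p := by
  have : Y⁻¹ * p * Y = Y⁻¹ * p * (Y⁻¹)⁻¹ := by group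
  unfold cycleCount
  rw [this, Equiv.Perm.cycleType_conj]

lemma cycleCount_permSum {k m : ℕ} (σ : Perm (Fin k)) (τ : Perm (Fin m)) :
    cycleCount (permSum k m (σ, τ)) = cycleCount σ + cycleCount τ := by
  have h : (permSum k m (σ, τ)).cycleType = σ.cycleType + τ.cycleType := by
    show (Equiv.permCongr finSumFinEquiv (Equiv.Perm.sumCongrHom (Fin k) (Fin m) (σ, τ))).cycleType = _
    rw [cycleType_permCongr']
    exact cycleType_sumCongr σ τ
  have hs1 : σ.cycleType.sum ≤ k := by
    rw [Equiv.Perm.sum_cycleType]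
    simpa using Finset.card_le_card (Finset.subset_univ σ.support)
  have hs2 : τ.cycleType.sum ≤ m := by
    rw [Equiv.Perm.sum_cycleType]
    simpa using Finset.card_le_card (Finset.subset_univ τ.support)
  unfold cycleCount
  rw [h]
  simp only [Multiset.sum_add, Multiset.card_add, Fintype.card_fin]
  omega

end lems

theorem stmt6 (k m : ℕ) (x : ℂ)
    {V₁ V₂ : Type} [AddCommGroup V₁] [Module ℂ V₁] [FiniteDimensional ℂ V₁]
    [AddCommGroup V₂] [Module ℂ V₂] [FiniteDimensional ℂ V₂]
    (ρ₁ : Representation ℂ (Equiv.Perm (Fin k)) V₁)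
    (ρ₂ : Representation ℂ (Equiv.Perm (Fin m)) V₂) :
    -- `W^x_{S_{k+m}}(m(V₁⊗V₂))`, with the induced character written via the standard
    -- induced character formula, and `dim = ((k+m)!/(k!·m!))·dim V₁·dim V₂` ...
    (1 / (((k + m).factorial / (k.factorial * m.factorial)
          * Module.finrank ℂ V₁ * Module.finrank ℂ V₂ : ℕ) : ℂ)) *
      ∑ X : Equiv.Perm (Fin (k + m)),
        ((1 / ((k.factorial * m.factorial : ℕ) : ℂ)) *
          ∑ Y : Equiv.Perm (Fin (k + m)), ∑ σ : Equiv.Perm (Fin k), ∑ τ : Equiv.Perm (Fin m),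
            if Y * X * Y⁻¹ = permSum k m (σ, τ)
              then LinearMap.trace ℂ V₁ (ρ₁ σ) * LinearMap.trace ℂ V₂ (ρ₂ τ) else 0) *
          x ^ cycleCount X
    -- ... equals `W^x_{S_k}(V₁) · W^x_{S_m}(V₂)`:
    = Wx k ρ₁ x * Wx m ρ₂ x := by
  set d₁ := Module.finrank ℂ V₁ with hd₁
  set d₂ := Module.finrank ℂ V₂ with hd₂
  set S₁ := ∑ σ : Equiv.Perm (Fin k), LinearMap.trace ℂ V₁ (ρ₁ σ) * x ^ cycleCount σ with hS₁
  set S₂ := ∑ τ : Equiv.Perm (Fin m), LinearMap.trace ℂ V₂ (ρ₂ τ) * x ^ cycleCount τ with hS₂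
  have key : ∑ X : Equiv.Perm (Fin (k + m)),
      (∑ Y : Equiv.Perm (Fin (k + m)), ∑ σ : Equiv.Perm (Fin k), ∑ τ : Equiv.Perm (Fin m),
        if Y * X * Y⁻¹ = permSum k m (σ, τ)
          then LinearMap.trace ℂ V₁ (ρ₁ σ) * LinearMap.trace ℂ V₂ (ρ₂ τ) else 0) *
        x ^ cycleCount X
      = ((k + m).factorial : ℂ) * (S₁ * S₂) := by
    have step1 : ∀ X : Equiv.Perm (Fin (k + m)),
        (∑ Y : Equiv.Perm (Fin (k + m)), ∑ σ : Equiv.Perm (Fin k), ∑ τ : Equiv.Perm (Fin m),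
          if Y * X * Y⁻¹ = permSum k m (σ, τ)
            then LinearMap.trace ℂ V₁ (ρ₁ σ) * LinearMap.trace ℂ V₂ (ρ₂ τ) else 0) *
          x ^ cycleCount X
        = ∑ Y : Equiv.Perm (Fin (k + m)), ∑ σ : Equiv.Perm (Fin k), ∑ τ : Equiv.Perm (Fin m),
          if X = Y⁻¹ * permSum k m (σ, τ) * Y
            then LinearMap.trace ℂ V₁ (ρ₁ σ) * LinearMap.trace ℂ V₂ (ρ₂ τ) * x ^ cycleCount X
            else 0 := by
      intro X
      rw [Finset.sum_mul]
      refine Finset.sum_congr rfl fun Y _ => ?_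
      rw [Finset.sum_mul]
      refine Finset.sum_congr rfl fun σ _ => ?_
      rw [Finset.sum_mul]
      refine Finset.sum_congr rfl fun τ _ => ?_
      rw [ite_mul, zero_mul]
      congr 1
      apply propext
      constructor
      · intro h; rw [← h]; group
      · intro h; rw [h]; group
    calc
      _ = ∑ X : Equiv.Perm (Fin (k + m)), ∑ Y : Equiv.Perm (Fin (k + m)),
            ∑ σ : Equiv.Perm (Fin k), ∑ τ : Equiv.Perm (Fin m),
            if X = Y⁻¹ * permSum k m (σ, τ) * Y
              then LinearMap.trace ℂ V₁ (ρ₁ σ) * LinearMap.trace ℂ V₂ (ρ₂ τ) * x ^ cycleCount X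
              else 0 := Finset.sum_congr rfl fun X _ => step1 X
      _ = ∑ Y : Equiv.Perm (Fin (k + m)), ∑ σ : Equiv.Perm (Fin k), ∑ τ : Equiv.Perm (Fin m),
            ∑ X : Equiv.Perm (Fin (k + m)),
            if X = Y⁻¹ * permSum k m (σ, τ) * Y
              then LinearMap.trace ℂ V₁ (ρ₁ σ) * LinearMap.trace ℂ V₂ (ρ₂ τ) * x ^ cycleCount X
              else 0 := by
            rw [Finset.sum_comm]
            refine Finset.sum_congr rfl fun Y _ => ?_
            rw [Finset.sum_comm]
            refine Finset.sum_congr rfl fun σ _ => ?_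
            rw [Finset.sum_comm]
      _ = ∑ Y : Equiv.Perm (Fin (k + m)), ∑ σ : Equiv.Perm (Fin k), ∑ τ : Equiv.Perm (Fin m),
            LinearMap.trace ℂ V₁ (ρ₁ σ) * LinearMap.trace ℂ V₂ (ρ₂ τ)
              * x ^ (cycleCount σ + cycleCount τ) := by
            refine Finset.sum_congr rfl fun Y _ => Finset.sum_congr rfl fun σ _ =>
              Finset.sum_congr rfl fun τ _ => ?_
            rw [Finset.sum_ite_eq' Finset.univ (Y⁻¹ * permSum k m (σ, τ) * Y)
              (fun X => LinearMap.trace ℂ V₁ (ρ₁ σ) * LinearMap.trace ℂ V₂ (ρ₂ τ) * x ^ cycleCount X)]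
            simp [cycleCount_conj, cycleCount_permSum]
      _ = ((k + m).factorial : ℂ) * (S₁ * S₂) := by
            rw [Finset.sum_const]
            rw [hS₁, hS₂, Finset.sum_mul_sum]
            simp only [pow_add]
            rw [Finset.card_univ, Fintype.card_perm, Fintype.card_fin]
            rw [nsmul_eq_mul]
            congr 1
            refine Finset.sum_congr rfl fun σ _ => Finset.sum_congr rfl fun τ _ => by ring
  have lhs_eq : (1 / (((k + m).factorial / (k.factorial * m.factorial) * d₁ * d₂ : ℕ) : ℂ)) *
      ∑ X : Equiv.Perm (Fin (k + m)),
        ((1 / ((k.factorial * m.factorial : ℕ) : ℂ)) *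
          ∑ Y : Equiv.Perm (Fin (k + m)), ∑ σ : Equiv.Perm (Fin k), ∑ τ : Equiv.Perm (Fin m),
            if Y * X * Y⁻¹ = permSum k m (σ, τ)
              then LinearMap.trace ℂ V₁ (ρ₁ σ) * LinearMap.trace ℂ V₂ (ρ₂ τ) else 0) *
          x ^ cycleCount X
      = (1 / (((k + m).factorial / (k.factorial * m.factorial) * d₁ * d₂ : ℕ) : ℂ)) *
        ((1 / ((k.factorial * m.factorial : ℕ) : ℂ)) * (((k + m).factorial : ℂ) * (S₁ * S₂))) := by
    rw [← key]
    congr 1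
    rw [Finset.mul_sum]
    exact Finset.sum_congr rfl fun X _ => mul_assoc _ _ _
  rw [lhs_eq]
  rw [Wx, Wx, ← hd₁, ← hd₂, ← hS₁, ← hS₂]
  by_cases h0 : d₁ = 0 ∨ d₂ = 0
  · rcases h0 with h | h <;> simp [h]
  · push_neg at h0
    obtain ⟨h1, h2⟩ := h0
    have hdvd : k.factorial * m.factorial ∣ (k + m).factorial :=
      Nat.factorial_mul_factorial_dvd_factorial_add k m
    have hN : ((k + m).factorial / (k.factorial * m.factorial) * d₁ * d₂) *
        (k.factorial * m.factorial) = (k + m).factorial * (d₁ * d₂) := by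
      rw [mul_right_comm, mul_right_comm _ d₁, Nat.div_mul_cancel hdvd]; ring
    have hNC : (((k + m).factorial / (k.factorial * m.factorial) * d₁ * d₂ : ℕ) : ℂ) *
        ((k.factorial * m.factorial : ℕ) : ℂ) = ((k + m).factorial : ℂ) * ((d₁ : ℂ) * d₂) := by
      exact_mod_cast congrArg (Nat.cast : ℕ → ℂ) hN
    have hCne : (k + m).factorial / (k.factorial * m.factorial) ≠ 0 := by
      intro hC
      have := Nat.div_mul_cancel hdvd
      rw [hC, zero_mul] at this
      exact (k + m).factorial_ne_zero this.symm
    have hd1 : (d₁ : ℂ) ≠ 0 := Nat.cast_ne_zero.mpr h1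
    have hd2 : (d₂ : ℂ) ≠ 0 := Nat.cast_ne_zero.mpr h2
    have hFne : (((k + m).factorial : ℕ) : ℂ) ≠ 0 :=
      Nat.cast_ne_zero.mpr (k + m).factorial_ne_zero
    set N : ℕ := (k + m).factorial / (k.factorial * m.factorial) * d₁ * d₂ with hNdef
    set f : ℕ := k.factorial * m.factorial with hfdef
    calc (1 / (N : ℂ)) * ((1 / (f : ℂ)) * (((k + m).factorial : ℂ) * (S₁ * S₂)))
        = (((k + m).factorial : ℂ) * (S₁ * S₂)) / ((N : ℂ) * (f : ℂ)) := by ring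
      _ = (((k + m).factorial : ℂ) * (S₁ * S₂)) / (((k + m).factorial : ℂ) * ((d₁ : ℂ) * d₂)) := by
          rw [hNC]
      _ = (S₁ * S₂) / ((d₁ : ℂ) * d₂) := mul_div_mul_left _ _ hFne
      _ = 1 / (d₁ : ℂ) * S₁ * (1 / (d₂ : ℂ) * S₂) := by field_simp
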